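/- If t satisfies the separation bound min_{x,y} P^t(x,y)/π(y) ≥ 1/4 (i.e., total separation s(t) ≤ 3/4), then there exists a randomized stopping time S with values in {t, 2t, 3t, ...} such that for every starting state x, X_S is distributed according to π and E_x[S] = 4t. In particular t_stop ≤ 4·t_sep. -/

import Mathlib

open scoped BigOperators ENNReal

noncomputable section

/-- Total variation distance between two distributions on a finite set,
as half the `ℓ¹` distance. -/
def tv {S : Type*} [Fintype S] (μ ν : S → ℝ) : ℝ := (1 / 2) * ∑ y, |μ y - ν y|

/-- Law of the chain with transition matrix `P` started at `x`, evaluated at an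
independent random time with distribution `T` on ℕ. -/
def lawAt {S : Type*} [Fintype S] [DecidableEq S] (P : Matrix S S ℝ) (T : ℕ → ℝ)
    (x : S) : S → ℝ :=
  fun y => ∑' n, T n * (P ^ n) x y

/-- The geometric distribution on `{1,2,...}` with mean `t` (success probability `1/t`). -/
def geo (t : ℕ) : ℕ → ℝ :=
  fun n => if n = 0 then 0 else (1 / (t : ℝ)) * (1 - 1 / (t : ℝ)) ^ (n - 1)

/-- A (randomized) stopping time for the chain with transition matrix `P` started from
distribution `μ`, encoded by the vectors `θ t x = ℙ(X_t = x, S ≥ t)` and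
`σ t x = ℙ(X_t = x, S = t)` (Baxter–Chacon / filling-rule representation). -/
structure StoppingRule {S : Type*} [Fintype S] (P : Matrix S S ℝ) (μ : S → ℝ) where
  θ : ℕ → S → ℝ
  σ : ℕ → S → ℝ
  σ_nonneg : ∀ t x, 0 ≤ σ t x
  σ_le : ∀ t x, σ t x ≤ θ t x
  θ_zero : ∀ x, θ 0 x = μ x
  θ_succ : ∀ t y, θ (t + 1) y = ∑ x, (θ t x - σ t x) * P x y

/-- Expectation of a stopping rule, `E[S] = ∑_t t · ℙ(S = t)`. -/
def stopExp {S : Type*} [Fintype S] {P : Matrix S S ℝ} {μ : S → ℝ}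
    (R : StoppingRule P μ) : ℝ≥0∞ :=
  ∑' t : ℕ, (t : ℝ≥0∞) * ENNReal.ofReal (∑ x, R.σ t x)

/-- The stopping rule stops at a state distributed according to `π`. -/
def IsStat {S : Type*} [Fintype S] {P : Matrix S S ℝ} {μ : S → ℝ}
    (R : StoppingRule P μ) (π : S → ℝ) : Prop :=
  ∀ y, ∑' t, R.σ t y = π y

/-- `t_stop`: the maximum over starting states of the minimal expected value of a
stationary (randomized) stopping time. -/
def tstop {S : Type*} [Fintype S] [DecidableEq S] (P : Matrix S S ℝ) (π : S → ℝ) : ℝ≥0∞ :=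
  ⨆ x : S, ⨅ R : {R : StoppingRule P (fun y => if y = x then (1 : ℝ) else 0) // IsStat R π},
    stopExp R.1

/- ### Auxiliary lemmas -/

lemma matpow_nonneg {S : Type*} [Fintype S] [DecidableEq S] (P : Matrix S S ℝ)
    (hP0 : ∀ x y, 0 ≤ P x y) : ∀ (n : ℕ) (x y : S), 0 ≤ (P ^ n) x y := by
  intro n
  induction n with
  | zero => intro x y; simp [Matrix.one_apply]; split <;> norm_num
  | succ n ih =>
    intro x y
    rw [pow_succ, Matrix.mul_apply]
    exact Finset.sum_nonneg fun z _ => mul_nonneg (ih x z) (hP0 z y)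

lemma matpow_rowsum {S : Type*} [Fintype S] [DecidableEq S] (P : Matrix S S ℝ)
    (hP1 : ∀ x, ∑ y, P x y = 1) : ∀ (n : ℕ) (x : S), ∑ y, (P ^ n) x y = 1 := by
  intro n
  induction n with
  | zero => intro x; simp [Matrix.one_apply]
  | succ n ih =>
    intro x
    simp_rw [pow_succ, Matrix.mul_apply]
    rw [Finset.sum_comm]
    simp_rw [← Finset.mul_sum, hP1, mul_one]
    exact ih x

lemma nat_helper1 (t k : ℕ) (ht : 0 < t) :
    (t * (k + 1) - 1) / t = k ∧ (t * (k + 1) - 1) % t = t - 1 := by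
  have h : t * (k + 1) - 1 = (t - 1) + t * k := by
    rw [Nat.mul_succ]
    set a := t * k
    omega
  rw [h]
  constructor
  · rw [Nat.add_mul_div_left _ _ ht, Nat.div_eq_of_lt (by omega)]; omega
  · rw [Nat.add_mul_mod_self_left, Nat.mod_eq_of_lt (by omega)]

lemma nat_helper2 (t s : ℕ) (ht : 0 < t) (hnd : ¬ t ∣ s) :
    (s - 1) / t = s / t ∧ (s - 1) % t + 1 = s % t := by
  have hr : s % t ≠ 0 := fun h => hnd (Nat.dvd_of_mod_eq_zero h)
  have hrt : s % t < t := Nat.mod_lt _ ht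
  have key : t * (s / t) + s % t = s := Nat.div_add_mod s t
  have h : s - 1 = (s % t - 1) + t * (s / t) := by
    set a := t * (s / t)
    omega
  rw [h]
  constructor
  · rw [Nat.add_mul_div_left _ _ ht, Nat.div_eq_of_lt (by omega)]; omega
  · rw [Nat.add_mul_mod_self_left, Nat.mod_eq_of_lt (by omega)]
    omega

/-- The main construction of the filling-rule stopping time. -/
lemma construction {S : Type*} [Fintype S] [DecidableEq S]
    (P : Matrix S S ℝ) (π : S → ℝ)
    (hP0 : ∀ x y, 0 ≤ P x y) (hP1 : ∀ x, ∑ y, P x y = 1)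
    (hπ0 : ∀ x, 0 ≤ π x) (hπ1 : ∑ x, π x = 1)
    (t : ℕ) (hsep : ∀ x y, (1 / 4) * π y ≤ (P ^ t) x y) (x : S) :
    ∃ R : StoppingRule P (fun y => if y = x then (1 : ℝ) else 0),
        IsStat R π ∧ (∀ s y, R.σ s y ≠ 0 → ∃ m, 1 ≤ m ∧ s = m * t) ∧
        stopExp R = 4 * (t : ℝ≥0∞) := by
  rcases Nat.eq_zero_or_pos t with ht | ht
  · -- degenerate case `t = 0`: the state space is a single point
    subst ht
    have hzero : ∀ y z : S, z ≠ y → π y = 0 := by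
      intro y z hzy
      have h := hsep z y
      rw [pow_zero, Matrix.one_apply_ne hzy] at h
      have := hπ0 y
      linarith
    obtain ⟨y0, hy0⟩ : ∃ y, π y ≠ 0 := by
      by_contra h
      push_neg at h
      rw [Finset.sum_eq_zero (fun y _ => h y)] at hπ1
      norm_num at hπ1
    have hall : ∀ z : S, z = y0 := by
      intro z
      by_contra hz
      exact hy0 (hzero y0 z hz)
    have heq : ∀ y z : S, y = z := fun y z => (hall y).trans (hall z).symm
    have hπone : ∀ y : S, π y = 1 := by
      intro y
      have : ∑ z, π z = π y := by
        rw [Finset.sum_eq_single y (fun b _ hb => absurd (heq b y) hb)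
          (fun h => absurd (Finset.mem_univ y) h)]
      rw [this] at hπ1
      exact hπ1
    refine ⟨⟨fun s y => if s = 0 then (if y = x then 1 else 0) else 0,
            fun s y => if s = 0 then π y else 0, ?_, ?_, ?_, ?_⟩, ?_, ?_, ?_⟩
    · intro s y; split
      · exact hπ0 y
      · exact le_rfl
    · intro s y; split
      · rw [hπone y, if_pos (heq y x)]
      · exact le_rfl
    · intro y; simp
    · intro s y
      rw [if_neg (Nat.succ_ne_zero s)]
      split
      · symm
        apply Finset.sum_eq_zero
        intro z _
        rw [if_pos (heq z x), hπone z]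
        ring
      · symm
        apply Finset.sum_eq_zero
        intro z _
        ring
    · intro y
      exact tsum_ite_eq 0 (fun _ => π y)
    · intro s y hs
      refine ⟨1, le_refl 1, ?_⟩
      dsimp only at hs
      by_cases h0 : s = 0
      · omega
      · rw [if_neg h0] at hs; exact absurd rfl hs
    · have : ∀ s : ℕ, (s : ℝ≥0∞) * ENNReal.ofReal (∑ z, if s = 0 then π z else 0) = 0 := by
        intro s
        by_cases h0 : s = 0
        · subst h0; simp
        · simp [h0]
      rw [stopExp]
      simp only [this]
      simp
  · -- main case `t ≥ 1`
    set δ : S → ℝ := fun y => if y = x then 1 else 0 with hδ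
    set ψ : ℕ → S → ℝ := fun m => Nat.rec δ
      (fun m ψm => fun y => (∑ z, ψm z * (P ^ t) z y) - (1/4) * (3/4)^m * π y) m with hψ
    have hψ0 : ∀ y, ψ 0 y = δ y := fun _ => rfl
    have hψs : ∀ m y, ψ (m+1) y = (∑ z, ψ m z * (P ^ t) z y) - (1/4) * (3/4)^m * π y :=
      fun _ _ => rfl
    have hK1 : ∀ m, (∀ y, 0 ≤ ψ m y) ∧ (∑ y, ψ m y = (3/4)^m) := by
      intro m
      induction m with
      | zero =>
        constructor
        · intro y; rw [hψ0]; dsimp only [δ]; split <;> norm_num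
        · rw [Finset.sum_congr rfl fun y _ => hψ0 y]
          simp [δ, Finset.sum_ite_eq]
      | succ m ih =>
        have hlow : ∀ y, (1/4) * (3/4)^m * π y ≤ ∑ z, ψ m z * (P ^ t) z y := by
          intro y
          calc (1/4) * (3/4)^m * π y = ∑ z, ψ m z * ((1/4) * π y) := by
                rw [← Finset.sum_mul, ih.2]; ring
            _ ≤ ∑ z, ψ m z * (P ^ t) z y :=
              Finset.sum_le_sum fun z _ => mul_le_mul_of_nonneg_left (hsep z y) (ih.1 z)
        constructor
        · intro y
          rw [hψs]
          linarith [hlow y]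
        · have h1 : ∑ y, ∑ z, ψ m z * (P ^ t) z y = (3/4)^m := by
            rw [Finset.sum_comm]
            simp_rw [← Finset.mul_sum, matpow_rowsum P hP1 t, mul_one]
            exact ih.2
          have h2 : ∑ y, (1/4) * (3/4)^m * π y = (1/4) * (3/4)^m := by
            rw [← Finset.mul_sum, hπ1, mul_one]
          rw [Finset.sum_congr rfl fun y _ => hψs m y, Finset.sum_sub_distrib, h1, h2]
          ring
    set σf : ℕ → S → ℝ := fun s y =>
      if t ∣ s ∧ s ≠ 0 then (1/4) * (3/4)^(s/t - 1) * π y else 0 with hσf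
    set θf : ℕ → S → ℝ := fun s y =>
      if s = 0 then δ y else ∑ z, ψ ((s-1)/t) z * (P ^ ((s-1) % t + 1)) z y with hθf
    have hone : ∀ (m : ℕ) (y : S), ∑ z, ψ m z * (P ^ 0) z y = ψ m y := by
      intro m y
      rw [pow_zero]
      simp [Matrix.one_apply]
    have hK2 : ∀ s y, θf s y - σf s y = ∑ z, ψ (s/t) z * (P ^ (s % t)) z y := by
      intro s y
      rcases Nat.eq_zero_or_pos s with hs | hs
      · subst hs
        simp only [hθf, hσf, if_pos rfl, Nat.zero_div, Nat.zero_mod]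
        rw [if_neg (by simp)]
        have h1 := hone 0 y
        have h2 := hψ0 y
        linarith
      · by_cases hd : t ∣ s
        · obtain ⟨m, rfl⟩ := hd
          have hm : m ≠ 0 := by rintro rfl; simp at hs
          obtain ⟨k, rfl⟩ := Nat.exists_eq_succ_of_ne_zero hm
          have hh := nat_helper1 t k ht
          have hdiv : t * (k+1) / t = k + 1 := Nat.mul_div_cancel_left _ ht
          have hmod : t * (k+1) % t = 0 := Nat.mul_mod_right t _
          simp only [hθf, hσf]
          rw [if_neg (by positivity), if_pos ⟨Dvd.intro _ rfl, by positivity⟩,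
            hh.1, hh.2, hdiv, hmod]
          have hexp : t - 1 + 1 = t := by omega
          rw [hexp, show k + 1 - 1 = k from rfl]
          have h1 := hone (k+1) y
          have h2 := hψs k y
          rw [← h2]
          exact h1.symm
        · have hh := nat_helper2 t s ht hd
          simp only [hθf, hσf]
          rw [if_neg (by omega), if_neg (by tauto), hh.1, hh.2]
          ring
    have hθnonneg : ∀ s y, σf s y ≤ θf s y := by
      intro s y
      have h2 := hK2 s y
      have hpos : 0 ≤ ∑ z, ψ (s/t) z * (P ^ (s % t)) z y :=
        Finset.sum_nonneg fun z _ => mul_nonneg ((hK1 _).1 z) (matpow_nonneg P hP0 _ z y)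
      linarith
    refine ⟨⟨θf, σf, ?_, hθnonneg, ?_, ?_⟩, ?_, ?_, ?_⟩
    · -- σ_nonneg
      intro s y
      simp only [hσf]
      split
      · have := hπ0 y; positivity
      · exact le_rfl
    · -- θ_zero
      intro y; simp [hθf, hδ]
    · -- θ_succ
      intro s y
      have hL : θf (s+1) y = ∑ z, ψ (s/t) z * (P ^ (s % t + 1)) z y := by
        simp only [hθf]
        rw [if_neg (Nat.succ_ne_zero s)]
        simp only [Nat.add_sub_cancel]
      rw [hL]
      simp only [hK2]
      calc ∑ z, ψ (s/t) z * (P ^ (s % t + 1)) z y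
          = ∑ w, ψ (s/t) w * ∑ z, (P ^ (s % t)) w z * P z y := by
            simp_rw [pow_succ, Matrix.mul_apply]
        _ = ∑ z, (∑ w, ψ (s/t) w * (P ^ (s % t)) w z) * P z y := by
            simp_rw [Finset.mul_sum, Finset.sum_mul]
            rw [Finset.sum_comm]
            simp_rw [mul_assoc]
    · -- IsStat
      intro y
      have hinj : Function.Injective (fun m : ℕ => (m+1) * t) := by
        intro a b h
        simp only at h
        have := Nat.eq_of_mul_eq_mul_right ht h
        omega
      have hsupp : Function.support (fun s => σf s y) ⊆
          Set.range (fun m : ℕ => (m+1)*t) := by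
        intro s hs
        simp only [Function.mem_support, hσf] at hs
        by_cases hc : t ∣ s ∧ s ≠ 0
        · obtain ⟨hd, hs0⟩ := hc
          have h1 : 1 ≤ s / t :=
            (Nat.one_le_div_iff ht).mpr (Nat.le_of_dvd (Nat.pos_of_ne_zero hs0) hd)
          refine ⟨s / t - 1, ?_⟩
          simp only
          rw [Nat.sub_add_cancel h1]
          exact Nat.div_mul_cancel hd
        · rw [if_neg hc] at hs
          exact absurd rfl hs
      rw [← hinj.tsum_eq hsupp]
      have hterm : ∀ m : ℕ, σf ((m+1)*t) y = (3/4)^m * ((1/4) * π y) := by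
        intro m
        simp only [hσf]
        rw [if_pos ⟨Dvd.intro_left _ rfl, by positivity⟩, Nat.mul_div_cancel _ ht]
        simp only [Nat.add_sub_cancel]
        ring
      show (∑' (m : ℕ), σf ((m+1)*t) y) = π y
      rw [tsum_congr hterm, tsum_mul_right,
        tsum_geometric_of_lt_one (by norm_num) (by norm_num)]
      ring
    · -- support of σ
      intro s y hs
      simp only [hσf] at hs
      by_cases hc : t ∣ s ∧ s ≠ 0
      · obtain ⟨hd, hs0⟩ := hc
        exact ⟨s / t, (Nat.one_le_div_iff ht).mpr (Nat.le_of_dvd (Nat.pos_of_ne_zero hs0) hd),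
          (Nat.div_mul_cancel hd).symm⟩
      · rw [if_neg hc] at hs
        exact absurd rfl hs
    · -- stopExp
      rw [stopExp]
      have hsum : ∀ s, (∑ z, σf s z) =
          if t ∣ s ∧ s ≠ 0 then (1/4) * (3/4)^(s/t-1) else 0 := by
        intro s
        simp only [hσf]
        split
        · rw [← Finset.mul_sum, hπ1, mul_one]
        · simp
      have hinj : Function.Injective (fun m : ℕ => (m+1) * t) := by
        intro a b h
        simp only at h
        have := Nat.eq_of_mul_eq_mul_right ht h
        omega
      have hsupp : Function.support
          (fun s : ℕ => (s : ℝ≥0∞) * ENNReal.ofReal (∑ z, σf s z)) ⊆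
          Set.range (fun m : ℕ => (m+1)*t) := by
        intro s hs
        simp only [Function.mem_support] at hs
        by_cases hc : t ∣ s ∧ s ≠ 0
        · obtain ⟨hd, hs0⟩ := hc
          have h1 : 1 ≤ s / t :=
            (Nat.one_le_div_iff ht).mpr (Nat.le_of_dvd (Nat.pos_of_ne_zero hs0) hd)
          refine ⟨s / t - 1, ?_⟩
          simp only
          rw [Nat.sub_add_cancel h1]
          exact Nat.div_mul_cancel hd
        · rw [hsum s, if_neg hc] at hs
          simp at hs
      rw [← hinj.tsum_eq hsupp]
      have hterm : ∀ m : ℕ, (((m+1)*t : ℕ) : ℝ≥0∞) *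
          ENNReal.ofReal (∑ z, σf ((m+1)*t) z) =
          (t : ℝ≥0∞) * ENNReal.ofReal (((m:ℝ)+1) * ((1/4) * (3/4)^m)) := by
        intro m
        rw [hsum, if_pos ⟨Dvd.intro_left _ rfl, by positivity⟩, Nat.mul_div_cancel _ ht]
        simp only [Nat.add_sub_cancel]
        rw [ENNReal.ofReal_mul (by positivity : (0:ℝ) ≤ (m:ℝ)+1)]
        rw [show ENNReal.ofReal ((m:ℝ)+1) = (((m+1 : ℕ)) : ℝ≥0∞) by
          rw [← ENNReal.ofReal_natCast (m+1)]; norm_num]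
        rw [Nat.cast_mul]
        ring
      show (∑' (m : ℕ), (((m+1)*t : ℕ) : ℝ≥0∞) * ENNReal.ofReal (∑ z, σf ((m+1)*t) z))
          = 4 * (t : ℝ≥0∞)
      rw [tsum_congr hterm, ENNReal.tsum_mul_left]
      have hsummable : Summable (fun m : ℕ => ((m:ℝ)+1) * ((1/4) * (3/4)^m)) := by
        have h1 : Summable (fun m : ℕ => (m:ℝ) * (3/4)^m) := by
          have := summable_pow_mul_geometric_of_norm_lt_one (R := ℝ) 1
            (r := (3/4 : ℝ)) (by rw [Real.norm_eq_abs, abs_lt]; constructor <;> norm_num)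
          simpa using this
        have h2 : Summable (fun m : ℕ => ((3:ℝ)/4)^m) :=
          summable_geometric_of_lt_one (by norm_num) (by norm_num)
        have := (h1.add h2).mul_left (1/4 : ℝ)
        apply this.congr
        intro m
        ring
      rw [← ENNReal.ofReal_tsum_of_nonneg (fun m => by positivity) hsummable]
      have hval : ∑' m : ℕ, ((m:ℝ)+1) * ((1/4) * (3/4)^m) = 4 := by
        have h1 : ∑' m : ℕ, (m:ℝ) * (3/4)^m = (3/4) / (1 - 3/4)^2 :=
          tsum_coe_mul_geometric_of_norm_lt_one (by rw [Real.norm_eq_abs, abs_lt]; constructor <;> norm_num)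
        have h2 : ∑' m : ℕ, ((3:ℝ)/4)^m = (1 - 3/4)⁻¹ :=
          tsum_geometric_of_lt_one (by norm_num) (by norm_num)
        have h1s : Summable (fun m : ℕ => (m:ℝ) * (3/4)^m) := by
          have := summable_pow_mul_geometric_of_norm_lt_one (R := ℝ) 1
            (r := (3/4 : ℝ)) (by rw [Real.norm_eq_abs, abs_lt]; constructor <;> norm_num)
          simpa using this
        have h2s : Summable (fun m : ℕ => ((3:ℝ)/4)^m) :=
          summable_geometric_of_lt_one (by norm_num) (by norm_num)
        have key : ∑' m : ℕ, ((m:ℝ)+1) * ((1/4) * (3/4)^m) =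
            (1/4) * (∑' m : ℕ, ((m:ℝ) * (3/4)^m + (3/4)^m)) := by
          rw [← tsum_mul_left]
          apply tsum_congr
          intro m
          ring
        rw [key, Summable.tsum_add h1s h2s, h1, h2]
        norm_num
      rw [hval]
      rw [show ENNReal.ofReal (4:ℝ) = (4 : ℝ≥0∞) by
        rw [show (4:ℝ) = ((4:ℕ):ℝ) by norm_num, ENNReal.ofReal_natCast]; norm_num]
      ring

theorem claim_tstop_le_tsep {S : Type*} [Fintype S] [DecidableEq S]
    (P : Matrix S S ℝ) (π : S → ℝ)
    (hP0 : ∀ x y, 0 ≤ P x y) (hP1 : ∀ x, ∑ y, P x y = 1)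
    (hirr : ∀ x y, ∃ n, 0 < (P ^ n) x y)
    (hπ0 : ∀ x, 0 ≤ π x) (hπ1 : ∑ x, π x = 1)
    (hπP : ∀ y, ∑ x, π x * P x y = π y)
    (t : ℕ) (hsep : ∀ x y, (1 / 4) * π y ≤ (P ^ t) x y) :
    (∀ x : S, ∃ R : StoppingRule P (fun y => if y = x then (1 : ℝ) else 0),
        IsStat R π ∧ (∀ s y, R.σ s y ≠ 0 → ∃ m, 1 ≤ m ∧ s = m * t) ∧
        stopExp R = 4 * (t : ℝ≥0∞)) ∧
    tstop P π ≤ 4 * ⨅ (u : ℕ) (_ : ∀ x y, (1 / 4) * π y ≤ (P ^ u) x y), (u : ℝ≥0∞) := by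
  constructor
  · exact fun x => construction P π hP0 hP1 hπ0 hπ1 t hsep x
  · by_cases h : ∃ u : ℕ, ∀ x y, (1 / 4) * π y ≤ (P ^ u) x y
    · classical
      set u0 := Nat.find h with hu0
      have hspec := Nat.find_spec h
      have hle : (u0 : ℝ≥0∞) ≤ ⨅ (u : ℕ) (_ : ∀ x y, (1 / 4) * π y ≤ (P ^ u) x y), (u : ℝ≥0∞) := by
        apply le_iInf₂
        intro u hu
        exact_mod_cast Nat.cast_le.mpr (Nat.find_min' h hu)
      have htstop : tstop P π ≤ 4 * (u0 : ℝ≥0∞) := by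
        rw [tstop]
        apply iSup_le
        intro x
        obtain ⟨R, hstat, _, hexp⟩ := construction P π hP0 hP1 hπ0 hπ1 u0 hspec x
        exact iInf_le_of_le ⟨R, hstat⟩ (le_of_eq hexp)
      exact htstop.trans (mul_le_mul_right hle 4)
    · push_neg at h
      have : (⨅ (u : ℕ) (_ : ∀ x y, (1 / 4) * π y ≤ (P ^ u) x y), (u : ℝ≥0∞)) = ⊤ := by
        rw [iInf_eq_top]
        intro u
        rw [iInf_eq_top]
        intro hu
        obtain ⟨x, y, hxy⟩ := h u
        exact absurd (hu x y) (not_le.mpr hxy)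
      rw [this]
      rw [ENNReal.mul_top (by norm_num)]
      exact le_top
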